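/- Let σ : ℕ × ℕ → ℕ × ℕ be the map σ(q, p) = (p, q) and τ : ℕ × ℕ → ℕ × ℕ be the map τ(q, p) = (q, p + q). For every pair of positive natural numbers (q, p) with gcd(q, p) = 1 and (q, p) ≠ (1, 1), there exists a nonempty word w over {σ, τ} (a list of Booleans with `true` = σ, `false` = τ, acting by a right fold so the last entry acts first) with no two adjacent σ's and whose last entry is τ, such that applying w to (1, 1) yields (q, p). -/

import Mathlib

/-- The map σ(q, p) = (p, q), swapping the components of a pair. -/
def sigmaMap : ℕ × ℕ → ℕ × ℕ := fun x => (x.2, x.1)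

/-- The map τ(q, p) = (q, p + q). -/
def tauMap : ℕ × ℕ → ℕ × ℕ := fun x => (x.1, x.2 + x.1)

/-- A word (list of Booleans, `true` = σ, `false` = τ) acts on ℕ × ℕ by a right
fold, so the last entry of the list acts first. -/
def applyWord (w : List Bool) (x : ℕ × ℕ) : ℕ × ℕ :=
  w.foldr (fun b y => if b then sigmaMap y else tauMap y) x

/-- No two adjacent `true` entries (no two consecutive σ's). -/
def NoTwoSigma (w : List Bool) : Prop :=
  List.Chain' (fun a b => a = false ∨ b = false) w

/-- Every coprime pair of positive naturals other than (1,1) is reached from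
(1,1) by some admissible word. -/
lemma applyWord_cons (b : Bool) (w : List Bool) (x : ℕ × ℕ) :
    applyWord (b :: w) x = if b then sigmaMap (applyWord w x) else tauMap (applyWord w x) := rfl

lemma aux : ∀ n q p : ℕ, q + p ≤ n → 0 < q → q < p → Nat.gcd q p = 1 →
    ∃ w : List Bool, w ≠ [] ∧ NoTwoSigma w ∧ w.getLast? = some false ∧
      w.head? = some false ∧ applyWord w (1, 1) = (q, p) := by
  intro n
  induction n with
  | zero => intro q p h hq hlt _; omega
  | succ n ih =>
    intro q p hle hq hlt hgcd
    have hgcd' : Nat.gcd q (p - q) = 1 := by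
      rw [Nat.gcd_sub_self_right hlt.le]; exact hgcd
    rcases lt_trichotomy q (p - q) with h | h | h
    · obtain ⟨w, hne, hc, hl, hh, ha⟩ := ih q (p - q) (by omega) hq h hgcd'
      refine ⟨false :: w, by simp, ?_, ?_, rfl, ?_⟩
      · exact List.IsChain.cons hc (by intro y _; left; rfl)
      · rw [List.getLast?_cons, hl]; simp
      · rw [applyWord_cons, ha]; simp [tauMap]; omega
    · -- p - q = q, so q divides gcd, q = 1, p = 2
      have hq1 : q = 1 := by
        have : Nat.gcd q (p - q) = q := by rw [← h]; simp [Nat.gcd_self]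
        omega
      have hp2 : p = 2 := by omega
      exact ⟨[false], by simp, by simp [NoTwoSigma, List.Chain'], rfl, rfl, by
        simp [applyWord, tauMap, hq1, hp2]⟩
    · have hpq : 0 < p - q := by omega
      obtain ⟨w, hne, hc, hl, hh, ha⟩ := ih (p - q) q (by omega) hpq h
        (by rwa [Nat.gcd_comm])
      refine ⟨false :: true :: w, by simp, ?_, ?_, rfl, ?_⟩
      · refine List.IsChain.cons_cons (Or.inl rfl) (List.IsChain.cons hc ?_)
        intro y hy; right
        cases w with
        | nil => simp at hy
        | cons a l => simp_all [List.head?]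
      · rw [List.getLast?_cons, List.getLast?_cons, hl]
        cases w <;> simp_all
      · rw [applyWord_cons, applyWord_cons, ha]
        simp [tauMap, sigmaMap]; omega

theorem exists_word_of_coprime (q p : ℕ) (hq : 0 < q) (hp : 0 < p)
    (hgcd : Nat.gcd q p = 1) (hne : (q, p) ≠ (1, 1)) :
    ∃ w : List Bool, w ≠ [] ∧ NoTwoSigma w ∧ w.getLast? = some false ∧
      applyWord w (1, 1) = (q, p) := by
  rcases lt_trichotomy q p with h | h | h
  · obtain ⟨w, hn, hc, hl, _, ha⟩ := aux (q + p) q p le_rfl hq h hgcd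
    exact ⟨w, hn, hc, hl, ha⟩
  · exfalso; subst h; simp [Nat.gcd_self] at hgcd; simp [hgcd] at hne
  · obtain ⟨w, hn, hc, hl, hh, ha⟩ := aux (p + q) p q le_rfl hp h
      (by rwa [Nat.gcd_comm])
    refine ⟨true :: w, by simp, ?_, ?_, ?_⟩
    · refine List.IsChain.cons hc ?_
      intro y hy; right
      cases w with
      | nil => simp at hy
      | cons a l => simp_all [List.head?]
    · rw [List.getLast?_cons, hl]; simp
    · rw [applyWord_cons, ha]; simp [sigmaMap]
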